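/- For every constant ε ∈ (0,1) and every constant δ > 0 there exists a constant C = C(ε, δ) > 0 such that the following holds. Let d = d(n) ≥ 1 + δ, let p = d/n, and let k = k(n) ≤ n^{1−ε}. Then with high probability the random graph G = G(n, p) satisfies, simultaneously for every m ≤ k, t_m(G) ≤ 3 + C · m · log d / log n. -/

import Mathlib

open MeasureTheory Filter

noncomputable section

/-- `G` has a tree decomposition of width at most `w`. -/
def HasTDWidth {V : Type} (G : SimpleGraph V) (w : ℕ) : Prop :=
  ∃ (ι : Type) (t : SimpleGraph ι) (bag : ι → Finset V),
    t.IsTree ∧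
    (∀ v : V, ∃ i, v ∈ bag i) ∧
    (∀ u v : V, G.Adj u v → ∃ i, u ∈ bag i ∧ v ∈ bag i) ∧
    (∀ v : V, (t.induce {i | v ∈ bag i}).Connected) ∧
    (∀ i, (bag i).card ≤ w + 1)

/-- The treewidth of a graph: the least width of a tree decomposition. -/
def treewidth {V : Type} (G : SimpleGraph V) : ℕ := sInf {w | HasTDWidth G w}

/-- Local treewidth `t_k(G)`: the largest treewidth of a subgraph of `G` on `k` vertices. -/
def localTreewidth {V : Type} (G : SimpleGraph V) (k : ℕ) : ℕ :=
  sSup {w | ∃ (s : Set V) (H : SimpleGraph s), s.ncard = k ∧ H ≤ G.induce s ∧ treewidth H = w}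

/-- The graph on `Fin n` determined by the Boolean edge-indicators `ω`. -/
def graphOf {n : ℕ} (ω : Sym2 (Fin n) → Bool) : SimpleGraph (Fin n) where
  Adj u v := u ≠ v ∧ ω s(u, v) = true
  symm := ⟨fun u v h => ⟨h.1.symm, by rw [Sym2.eq_swap]; exact h.2⟩⟩
  loopless := ⟨fun u h => h.1 rfl⟩

/-- The product Bernoulli(p) measure on edge indicators: each possible edge appears
independently with probability `p`.  Together with `graphOf`, this realizes the
binomial random graph `G(n, p)`. -/
def edgeMeasure (n : ℕ) (p : ℝ) : Measure (Sym2 (Fin n) → Bool) :=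
  Measure.pi fun _ => (PMF.bernoulli (min (Real.toNNReal p) 1) (min_le_right _ _)).toMeasure

open scoped ENNReal NNReal

-- trivial tree : bot graph on PUnit is a tree
lemma bot_punit_isTree : (⊥ : SimpleGraph PUnit).IsTree := by
  refine ⟨@SimpleGraph.Connected.mk _ _ (fun u v => ?_) ⟨PUnit.unit⟩, SimpleGraph.isAcyclic_bot⟩
  cases u; cases v; exact SimpleGraph.Reachable.refl _

lemma hasTDWidth_of_isEmpty {V : Type} [IsEmpty V] (G : SimpleGraph V) (w : ℕ) :
    HasTDWidth G w := by
  refine ⟨PUnit, ⊥, fun _ => ∅, bot_punit_isTree, ?_, ?_, ?_, ?_⟩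
  · exact fun v => (IsEmpty.false v).elim
  · exact fun u v _ => (IsEmpty.false v).elim
  · exact fun v => (IsEmpty.false v).elim
  · intro i; simp

lemma hasTDWidth_univ {V : Type} [Fintype V] [Nonempty V] (G : SimpleGraph V) :
    HasTDWidth G (Fintype.card V - 1) := by
  classical
  refine ⟨PUnit, ⊥, fun _ => Finset.univ, bot_punit_isTree, ?_, ?_, ?_, ?_⟩
  · exact fun v => ⟨PUnit.unit, Finset.mem_univ v⟩
  · exact fun u v _ => ⟨PUnit.unit, Finset.mem_univ u, Finset.mem_univ v⟩
  · intro v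
    refine @SimpleGraph.Connected.mk _ _ (fun a b => ?_) ⟨⟨PUnit.unit, by simp⟩⟩
    have : a = b := Subsingleton.elim a b
    exact this ▸ SimpleGraph.Reachable.refl a
  · intro i
    have : 1 ≤ Fintype.card V := Fintype.card_pos
    simp [Finset.card_univ]
    omega

lemma treewidth_le {V : Type} {G : SimpleGraph V} {w : ℕ} (h : HasTDWidth G w) :
    treewidth G ≤ w := Nat.sInf_le h

lemma localTreewidth_le {V : Type} (G : SimpleGraph V) (m B : ℕ)
    (h : ∀ (s : Set V) (H : SimpleGraph s), s.ncard = m → H ≤ G.induce s → treewidth H ≤ B) :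
    localTreewidth G m ≤ B := by
  apply csSup_le'
  rintro w ⟨s, H, h1, h2, rfl⟩
  exact h s H h1 h2


def funcGraph {V : Type} (f : V → V) : SimpleGraph V where
  Adj a b := a ≠ b ∧ (f a = b ∨ f b = a)
  symm := ⟨fun a b h => ⟨h.1.symm, h.2.symm⟩⟩
  loopless := ⟨fun a h => h.1 rfl⟩

variable {V : Type} {f : V → V} {rk : V → ℕ} {r₀ : V}

lemma funcGraph_reach (hrk : ∀ v, v ≠ r₀ → rk (f v) < rk v) :
    ∀ (N : ℕ) (v : V), rk v ≤ N → (funcGraph f).Reachable v r₀ := by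
  intro N
  induction N with
  | zero =>
    intro v hv
    by_cases h : v = r₀
    · exact h ▸ SimpleGraph.Reachable.refl _
    · exact absurd (hrk v h) (by omega)
  | succ N ih =>
    intro v hv
    by_cases h : v = r₀
    · exact h ▸ SimpleGraph.Reachable.refl _
    · have h1 : rk (f v) < rk v := hrk v h
      have hne : v ≠ f v := fun he => by rw [← he] at h1; omega
      have hadj : (funcGraph f).Adj v (f v) := ⟨hne, Or.inl rfl⟩
      exact hadj.reachable.trans (ih (f v) (by omega))

lemma funcGraph_connected [Nonempty V] (hrk : ∀ v, v ≠ r₀ → rk (f v) < rk v) :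
    (funcGraph f).Connected := by
  refine @SimpleGraph.Connected.mk _ _ (fun u v => ?_) ‹_›
  exact (funcGraph_reach hrk (rk u) u le_rfl).trans
    (funcGraph_reach hrk (rk v) v le_rfl).symm

lemma funcGraph_acyclic (hfr : f r₀ = r₀) (hrk : ∀ v, v ≠ r₀ → rk (f v) < rk v) :
    (funcGraph f).IsAcyclic := by
  classical
  intro v c hc
  -- pick a maximal-rank vertex of the support
  obtain ⟨x, hxmem, hxmax⟩ := Finset.exists_max_image c.support.toFinset rk
    ⟨v, by simp [c.start_mem_support]⟩
  have hx : x ∈ c.support := by simpa using hxmem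
  have hmax : ∀ y ∈ c.support, rk y ≤ rk x := fun y hy => hxmax y (by simpa using hy)
  set c' : (funcGraph f).Walk x x := c.rotate x hx with hc'def
  have hc' : c'.IsCycle := hc.rotate hx
  have hmax' : ∀ y ∈ c'.support, rk y ≤ rk x := by
    intro y hy
    rcases List.mem_cons.mp (c'.support_eq_cons ▸ hy) with h | h
    · exact h ▸ le_rfl
    · exact hmax y (List.mem_of_mem_tail ((SimpleGraph.Walk.support_rotate c x hx).mem_iff.mp h))
  -- key: any neighbor of x on the cycle is f x
  have hnbr : ∀ y, (funcGraph f).Adj x y → y ∈ c'.support → y = f x := by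
    intro y hadj hy
    rcases hadj.2 with h | h
    · exact h.symm
    · exfalso
      have hyne : y ≠ r₀ := by
        intro he
        rw [he] at h; rw [hfr] at h
        exact hadj.1 (by rw [← h, ← he])
      have := hrk y hyne
      rw [h] at this
      exact absurd (hmax' y hy) (by omega)
  -- destruct the cycle
  clear_value c'
  clear hc'def hc hx hxmem hxmax hmax
  cases c' with
  | nil => exact SimpleGraph.Walk.IsCycle.not_of_nil hc'
  | @cons _ y _ hadj q =>
    obtain ⟨z, q₂, hadj', heq⟩ := SimpleGraph.Walk.exists_cons_eq_concat hadj q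
    have hedges : SimpleGraph.Walk.edges (SimpleGraph.Walk.cons hadj q)
        = s(x, y) :: q.edges := SimpleGraph.Walk.edges_cons _ _
    have hedges' : SimpleGraph.Walk.edges (SimpleGraph.Walk.cons hadj q)
        = q₂.edges ++ [s(z, x)] := by
      rw [heq, SimpleGraph.Walk.edges_concat, List.concat_eq_append]
    have hq₂ne : q₂.edges ≠ [] := by
      intro hnil
      have h3 := hc'.three_le_length
      have hlen : (SimpleGraph.Walk.cons hadj q).edges.length =
          (SimpleGraph.Walk.cons hadj q).length := SimpleGraph.Walk.length_edges _
      rw [hedges'] at hlen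
      rw [hnil] at hlen
      simp only [List.nil_append, List.length_singleton, SimpleGraph.Walk.length_cons] at hlen
      rw [SimpleGraph.Walk.length_cons] at h3
      omega
    -- y and z are neighbors of x on the support
    have hymem : y ∈ (SimpleGraph.Walk.cons hadj q).support := by
      rw [SimpleGraph.Walk.support_cons]
      exact List.mem_cons_of_mem _ q.start_mem_support
    have hzx_mem : s(z, x) ∈ (SimpleGraph.Walk.cons hadj q).edges := by
      rw [hedges']; simp
    have hzmem : z ∈ (SimpleGraph.Walk.cons hadj q).support :=
      SimpleGraph.Walk.fst_mem_support_of_mem_edges _ hzx_mem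
    have hyfx : y = f x := hnbr y hadj hymem
    have hzfx : z = f x := hnbr z hadj'.symm hzmem
    -- now s(x,y) appears twice in the edges
    have hnodup : (SimpleGraph.Walk.cons hadj q).edges.Nodup := hc'.edges_nodup
    rw [hedges] at hnodup
    have hmemq : s(z, x) ∈ q.edges := by
      obtain ⟨e0, l, hl⟩ := List.exists_cons_of_ne_nil hq₂ne
      rw [hl] at hedges'
      rw [hedges] at hedges'
      simp only [List.cons_append, List.cons.injEq] at hedges'
      rw [hedges'.2]
      simp
    rw [List.nodup_cons] at hnodup
    apply hnodup.1
    have : s(z, x) = s(x, y) := by rw [hyfx, hzfx, Sym2.eq_swap]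
    rwa [this] at hmemq

def eCnt {V : Type} (G : SimpleGraph V) (S : Finset V) : ℕ :=
  (@Finset.filter _ (fun e => e ∈ G.edgeSet) (Classical.decPred _) S.sym2).card

lemma funcGraph_adj {V : Type} (f : V → V) (a b : V) :
    (funcGraph f).Adj a b ↔ a ≠ b ∧ (f a = b ∨ f b = a) := Iff.rfl

lemma funcGraph_isTree {V : Type} [Fintype V] [Nonempty V] (f : V → V) (rk : V → ℕ) (r₀ : V)
    (hfr : f r₀ = r₀) (hrk : ∀ v, v ≠ r₀ → rk (f v) < rk v) : (funcGraph f).IsTree :=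
  ⟨funcGraph_connected hrk, funcGraph_acyclic hfr hrk⟩

open SimpleGraph in
theorem key_lemma {V : Type} [Fintype V] (H : SimpleGraph V) (t : ℕ)
    (hE : ∀ S : Finset V, eCnt H S ≤ S.card + t) : HasTDWidth H (t + 2) := by
  classical
  cases isEmpty_or_nonempty V with
  | inl hV => exact hasTDWidth_of_isEmpty H _
  | inr hV =>
  -- roots of components
  set R : V → V := fun v => (H.connectedComponentMk v).out with hRdef
  have hRmk : ∀ v, H.connectedComponentMk (R v) = H.connectedComponentMk v :=
    fun v => Quot.out_eq _
  have hreach : ∀ v, H.Reachable v (R v) :=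
    fun v => (SimpleGraph.ConnectedComponent.exact (hRmk v)).symm
  have hRof : ∀ {u v : V}, H.connectedComponentMk u = H.connectedComponentMk v → R u = R v := by
    intro u v h
    simp only [hRdef]
    rw [h]
  have hRR : ∀ v, R (R v) = R v := fun v => hRof (hRmk v)
  have hRadj : ∀ {u v : V}, H.Adj u v → R u = R v :=
    fun h => hRof (SimpleGraph.ConnectedComponent.connectedComponentMk_eq_of_adj h)
  -- parent towards root
  have hpar : ∀ v, v ≠ R v →
      ∃ u, H.Adj v u ∧ R u = R v ∧ H.dist u (R u) < H.dist v (R v) := by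
    intro v hv
    obtain ⟨p, hp⟩ := (hreach v).exists_walk_length_eq_dist
    have hd0 : H.dist v (R v) ≠ 0 := by
      intro h0
      exact hv ((hreach v).dist_eq_zero_iff.mp h0)
    have hnil : ¬ p.Nil := by
      intro hn
      rw [SimpleGraph.Walk.nil_iff_length_eq] at hn
      rw [hp] at hn
      exact hd0 hn
    refine ⟨p.getVert 1, p.adj_snd hnil, (hRadj (p.adj_snd hnil)).symm, ?_⟩
    have h1 : R (p.getVert 1) = R v := (hRadj (p.adj_snd hnil)).symm
    rw [h1]
    have h2 : H.dist (p.getVert 1) (R v) ≤ p.tail.length := SimpleGraph.dist_le _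
    have h3 : p.tail.length + 1 = p.length := SimpleGraph.Walk.length_tail_add_one hnil
    omega
  choose! par hpar1 hpar2 hpar3 using hpar
  set r₀ : V := R (Classical.arbitrary V) with hr₀def
  have hr₀R : R r₀ = r₀ := hRR _
  set f : V → V := fun v => if v = R v then r₀ else par v with hfdef
  have hfroot : ∀ v, v = R v → f v = r₀ := fun v h => if_pos h
  have hfnr : ∀ v, v ≠ R v → f v = par v := fun v h => if_neg h
  have hfr₀ : f r₀ = r₀ := hfroot _ hr₀R.symm
  -- key facts about f
  have hfadj : ∀ v, v ≠ R v → H.Adj v (f v) := by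
    intro v h; rw [hfnr v h]; exact hpar1 v h
  have hfR : ∀ v, v ≠ R v → R (f v) = R v := by
    intro v h; rw [hfnr v h]; exact hpar2 v h
  -- rank
  set rk : V → ℕ := fun v =>
    H.dist v (R v) + (if R v = r₀ then 0 else Fintype.card V + 1) with hrkdef
  have hdvlt : ∀ v, H.dist v (R v) < Fintype.card V := by
    intro v
    obtain ⟨p, hp, hlen⟩ := (hreach v).exists_path_of_dist
    have := hp.length_lt
    omega
  have hrkmain : ∀ v, v ≠ r₀ → rk (f v) < rk v := by
    intro v hv
    by_cases hroot : v = R v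
    · rw [hfroot v hroot]
      have h1 : rk r₀ = 0 := by
        simp [hrkdef, hr₀R]
      have h2 : R v ≠ r₀ := by rw [← hroot]; exact hv
      have h3 : rk v = H.dist v (R v) + (Fintype.card V + 1) := by
        simp only [hrkdef, if_neg h2]
      omega
    · have h1 : R (f v) = R v := hfR v hroot
      have h2 : H.dist (f v) (R (f v)) < H.dist v (R v) := by
        rw [hfnr v hroot]
        exact hpar3 v hroot
      simp only [hrkdef, h1]
      rw [hfnr v hroot] at h2 ⊢
      rw [hpar2 v hroot] at h2
      omega
  have hfneq : ∀ v, v ≠ r₀ → f v ≠ v := by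
    intro v hv he
    have := hrkmain v hv
    rw [he] at this
    omega
  -- the tree
  set T : SimpleGraph V := funcGraph f with hTdef
  have hTtree : T.IsTree := funcGraph_isTree f rk r₀ hfr₀ hrkmain
  -- picking representatives of edges
  set pick : Sym2 V → V := fun e => e.out.1 with hpickdef
  have hpickmem : ∀ e : Sym2 V, pick e ∈ e := fun e => Sym2.out_fst_mem e
  -- the extra bag contents
  set NFS : V → Finset (Sym2 V) := fun v =>
    H.edgeFinset.filter (fun e => (¬ ∃ w, e = s(w, f w)) ∧ R (pick e) = R v) with hNFSdef
  set NF : V → Finset V := fun v => (NFS v).image pick with hNFdef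
  set bag : V → Finset V := fun v => insert v (insert (f v) (NF v)) with hbagdef
  have hNFS_eq : ∀ {u v : V}, R u = R v → NFS u = NFS v := by
    intro u v h
    simp only [hNFSdef, h]
  have hNF_R : ∀ {x v : V}, x ∈ NF v → R x = R v := by
    intro x v hx
    simp only [hNFdef, Finset.mem_image] at hx
    obtain ⟨e, he, rfl⟩ := hx
    simp only [hNFSdef, Finset.mem_filter] at he
    exact he.2.2
  -- membership in bags
  have hmem_bag : ∀ {x i : V}, x ∈ bag i ↔ x = i ∨ x = f i ∨ x ∈ NF i := by
    intro x i
    simp only [hbagdef, Finset.mem_insert]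
  -- vertex condition
  have hvert : ∀ v : V, v ∈ bag v := fun v => hmem_bag.mpr (Or.inl rfl)
  -- edge condition
  have hedge : ∀ u v : V, H.Adj u v → ∃ i, u ∈ bag i ∧ v ∈ bag i := by
    intro u v huv
    by_cases hfor : ∃ w, s(u, v) = s(w, f w)
    · obtain ⟨w, hw⟩ := hfor
      rw [Sym2.eq_iff] at hw
      rcases hw with ⟨h1, h2⟩ | ⟨h1, h2⟩
      · exact ⟨u, hmem_bag.mpr (Or.inl rfl),
          hmem_bag.mpr (Or.inr (Or.inl (by rw [h2, h1])))⟩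
      · exact ⟨v, hmem_bag.mpr (Or.inr (Or.inl (by rw [h1, h2]))),
          hmem_bag.mpr (Or.inl rfl)⟩
    · have hes : s(u, v) ∈ H.edgeFinset := by
        rw [SimpleGraph.mem_edgeFinset]; exact huv
      have hpm := hpickmem s(u, v)
      rw [Sym2.mem_iff] at hpm
      rcases hpm with hp | hp
      · refine ⟨v, hmem_bag.mpr (Or.inr (Or.inr ?_)), hmem_bag.mpr (Or.inl rfl)⟩
        simp only [hNFdef, Finset.mem_image]
        refine ⟨s(u, v), ?_, hp⟩
        simp only [hNFSdef, Finset.mem_filter]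
        exact ⟨hes, hfor, by rw [hp]; exact hRadj huv⟩
      · refine ⟨u, hmem_bag.mpr (Or.inl rfl), hmem_bag.mpr (Or.inr (Or.inr ?_))⟩
        simp only [hNFdef, Finset.mem_image]
        refine ⟨s(u, v), ?_, hp⟩
        simp only [hNFSdef, Finset.mem_filter]
        exact ⟨hes, hfor, by rw [hp]; exact (hRadj huv).symm⟩
  -- adjacency helper for T
  have hTadj : ∀ a b : V, a ≠ b → (f a = b ∨ f b = a) → T.Adj a b := by
    intro a b h1 h2; rw [hTdef, funcGraph_adj]; exact ⟨h1, h2⟩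
  -- connectivity condition
  have hconn : ∀ x : V, (T.induce {i | x ∈ bag i}).Connected := by
    intro x
    set A : Set V := {i | x ∈ bag i} with hAdef
    have hxA : x ∈ A := hvert x
    have hstep : ∀ (a b : V) (ha : a ∈ A) (hb : b ∈ A), T.Adj a b →
        (T.induce A).Reachable ⟨a, ha⟩ ⟨b, hb⟩ := by
      intro a b ha hb hab
      exact SimpleGraph.Adj.reachable (by simpa using hab)
    have hclimb : ∀ (N : ℕ) (a : V) (ha : a ∈ A) (b : V) (hb : b ∈ A), b = R a →
        (∀ y, R y = R a → y ∈ A) → H.dist a (R a) ≤ N →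
        (T.induce A).Reachable ⟨a, ha⟩ ⟨b, hb⟩ := by
      intro N
      induction N with
      | zero =>
        intro a ha b hb hbR hsub hd
        have h0 : a = R a := (hreach a).dist_eq_zero_iff.mp (by omega)
        exact (Subtype.ext (hbR.trans h0.symm) :
          (⟨b, hb⟩ : ↥A) = ⟨a, ha⟩) ▸ SimpleGraph.Reachable.refl _
      | succ N ih =>
        intro a ha b hb hbR hsub hd
        by_cases hroot : a = R a
        · exact (Subtype.ext (hbR.trans hroot.symm) :
            (⟨b, hb⟩ : ↥A) = ⟨a, ha⟩) ▸ SimpleGraph.Reachable.refl _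
        · have hfa : f a ∈ A := hsub (f a) (hfR a hroot)
          have hadj : T.Adj a (f a) := hTadj a (f a) (hfadj a hroot).ne (Or.inl rfl)
          have hd2 : H.dist (f a) (R (f a)) ≤ N := by
            have h2 : H.dist (f a) (R (f a)) < H.dist a (R a) := by
              rw [hfnr a hroot]
              exact hpar3 a hroot
            omega
          have hrec := ih (f a) hfa b hb (by rw [hfR a hroot]; exact hbR)
            (by intro y hy; exact hsub y (by rw [← hfR a hroot]; exact hy)) hd2
          exact (hstep a (f a) ha hfa hadj).trans hrec
    refine @SimpleGraph.Connected.mk _ _ (fun p q => ?_) ⟨⟨x, hxA⟩⟩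
    suffices hto : ∀ (a : V) (ha : a ∈ A), (T.induce A).Reachable ⟨a, ha⟩ ⟨x, hxA⟩ by
      obtain ⟨a, ha⟩ := p; obtain ⟨b, hb⟩ := q
      exact (hto a ha).trans (hto b hb).symm
    intro a ha
    have hmem : x = a ∨ x = f a ∨ x ∈ NF a := hmem_bag.mp ha
    rcases hmem with h1 | h2 | h3
    · exact (Subtype.ext h1 : (⟨x, hxA⟩ : ↥A) = ⟨a, ha⟩) ▸ SimpleGraph.Reachable.refl _
    · by_cases hax : a = x
      · exact (Subtype.ext hax.symm : (⟨x, hxA⟩ : ↥A) = ⟨a, ha⟩) ▸ SimpleGraph.Reachable.refl _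
      · exact hstep a x ha hxA (hTadj a x hax (Or.inl h2.symm))
    · have hRxa : R x = R a := hNF_R h3
      have hsub : ∀ y, R y = R a → y ∈ A := by
        intro y hy
        refine hmem_bag.mpr (Or.inr (Or.inr ?_))
        simp only [hNFdef]
        rw [hNFS_eq hy]
        simpa [hNFdef] using h3
      have h4 := hclimb (H.dist a (R a)) a ha (R a) (hsub _ (hRR a)) rfl hsub le_rfl
      have h5 := hclimb (H.dist x (R x)) x hxA (R a) (hsub _ (hRR a)) hRxa.symm
          (by intro y hy; exact hsub y (hy.trans hRxa)) le_rfl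
      exact h4.trans h5.symm
  -- cardinality of the extra sets
  have hNFcard : ∀ v : V, (NF v).card ≤ t + 1 := by
    intro v
    set S : Finset V := Finset.univ.filter (fun u => R u = R v) with hSdef
    have hRvS : R v ∈ S := by simp [hSdef, hRR]
    set EW : Finset (Sym2 V) :=
      @Finset.filter _ (fun e => e ∈ H.edgeSet) (Classical.decPred _) S.sym2 with hEWdef
    set Fe : Finset (Sym2 V) := (S.erase (R v)).image (fun u => s(u, f u)) with hFedef
    have hmemS : ∀ {u : V}, u ∈ S ↔ R u = R v := by
      intro u; simp [hSdef]
    have hFeEW : Fe ⊆ EW := by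
      intro e he
      simp only [hFedef, Finset.mem_image] at he
      obtain ⟨u, hu, rfl⟩ := he
      have hu1 : u ≠ R v := (Finset.mem_erase.mp hu).1
      have hu2 : R u = R v := hmemS.mp (Finset.mem_erase.mp hu).2
      have hu3 : u ≠ R u := by rw [hu2]; exact hu1
      have hadj : H.Adj u (f u) := hfadj u hu3
      simp only [hEWdef, Finset.mem_filter]
      refine ⟨?_, hadj⟩
      rw [Finset.mk_mem_sym2_iff]
      exact ⟨hmemS.mpr hu2, hmemS.mpr (by rw [hfR u hu3]; exact hu2)⟩
    have hNFSEW : NFS v ⊆ EW := by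
      intro e he
      simp only [hNFSdef, Finset.mem_filter, SimpleGraph.mem_edgeFinset] at he
      obtain ⟨hes, hnf, hRp⟩ := he
      have hp1 : pick e ∈ e := hpickmem e
      have hspec : s(pick e, Sym2.Mem.other hp1) = e := Sym2.other_spec hp1
      have hadj : H.Adj (pick e) (Sym2.Mem.other hp1) := by
        rw [← SimpleGraph.mem_edgeSet, hspec]; exact hes
      simp only [hEWdef, Finset.mem_filter]
      refine ⟨?_, hes⟩
      rw [← hspec, Finset.mk_mem_sym2_iff]
      exact ⟨hmemS.mpr hRp, hmemS.mpr ((hRadj hadj).symm.trans hRp)⟩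
    have hdisj : Disjoint (NFS v) Fe := by
      rw [Finset.disjoint_left]
      intro e he hf
      simp only [hNFSdef, Finset.mem_filter] at he
      simp only [hFedef, Finset.mem_image] at hf
      obtain ⟨u, _, rfl⟩ := hf
      exact he.2.1 ⟨u, rfl⟩
    have hnr₀ : ∀ u : V, u ≠ R u → u ≠ r₀ := by
      intro u hu he
      exact hu (by rw [he, hr₀R])
    have hFecard : Fe.card = S.card - 1 := by
      rw [hFedef, Finset.card_image_of_injOn, Finset.card_erase_of_mem hRvS]
      intro u hu w hw he
      by_contra hne
      simp only [Finset.coe_erase, Set.mem_diff, Finset.mem_coe, Set.mem_singleton_iff] at hu hw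
      have hu3 : u ≠ R u := by rw [hmemS.mp hu.1]; exact hu.2
      have hw3 : w ≠ R w := by rw [hmemS.mp hw.1]; exact hw.2
      rw [Sym2.eq_iff] at he
      rcases he with ⟨h1, h2⟩ | ⟨h1, h2⟩
      · exact hne h1
      · have hq1 := hrkmain u (hnr₀ u hu3)
        have hq2 := hrkmain w (hnr₀ w hw3)
        rw [h2] at hq1
        rw [← h1] at hq2
        omega
    have hunion : (NFS v).card + Fe.card ≤ S.card + t := by
      rw [← Finset.card_union_of_disjoint hdisj]
      calc (NFS v ∪ Fe).card ≤ EW.card :=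
            Finset.card_le_card (Finset.union_subset hNFSEW hFeEW)
        _ = eCnt H S := rfl
        _ ≤ S.card + t := hE S
    have hScard : 1 ≤ S.card := Finset.card_pos.mpr ⟨R v, hRvS⟩
    have himg : (NF v).card ≤ (NFS v).card := Finset.card_image_le
    rw [hFecard] at hunion
    omega
  have hcard : ∀ i, (bag i).card ≤ (t + 2) + 1 := by
    intro i
    have h1 : (bag i).card ≤ (NF i).card + 2 := by
      simp only [hbagdef]
      have h2 := Finset.card_insert_le (f i) (NF i)
      have h3 := Finset.card_insert_le i (insert (f i) (NF i))
      omega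
    have := hNFcard i
    omega
  exact ⟨V, T, bag, hTtree, fun v => ⟨v, hvert v⟩, hedge, hconn, hcard⟩

-- (L1) transfer of edge counts along the subtype embedding
lemma eCnt_le_of_le {W : Type} [DecidableEq W] {s : Set W} (G : SimpleGraph W)
    (H : SimpleGraph s) (hle : H ≤ G.induce s) (S' : Finset s) :
    eCnt H S' ≤ eCnt G (S'.map (Function.Embedding.subtype _)) := by
  classical
  unfold eCnt
  apply Finset.card_le_card_of_injOn (Sym2.map (Function.Embedding.subtype _))
  · intro e
    induction e using Sym2.ind with
    | _ a b =>
      intro he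
      simp only [Finset.mem_coe, Finset.mem_filter] at he ⊢
      obtain ⟨he1, he2⟩ := he
      rw [Finset.mk_mem_sym2_iff] at he1
      rw [Sym2.map_pair_eq]
      constructor
      · rw [Finset.mk_mem_sym2_iff]
        constructor
        · exact Finset.mem_map_of_mem _ he1.1
        · exact Finset.mem_map_of_mem _ he1.2
      · have hadj : H.Adj a b := he2
        have h2 : (G.induce s).Adj a b := hle hadj
        simp only [SimpleGraph.comap_adj, SimpleGraph.induce_eq_coe_induce_top] at h2 ⊢
        simp only [SimpleGraph.mem_edgeSet]
        exact hle hadj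
  · exact (Sym2.map.injective (Function.Embedding.injective _)).injOn

-- (L2) from the global sparsity event to the local treewidth bound
lemma localTreewidth_bound {n : ℕ} (G : SimpleGraph (Fin n)) (kk : ℕ) (TT : ℕ → ℕ)
    (hTTmono : Monotone TT)
    (hA : ∀ S : Finset (Fin n), S.card ≤ kk → eCnt G S ≤ S.card + TT S.card) :
    ∀ m ≤ kk, localTreewidth G m ≤ TT m + 2 := by
  intro m hm
  apply localTreewidth_le
  intro s H h1 h2
  haveI : Fintype ↥s := (Set.toFinite s).fintype
  have hcards : Fintype.card ↥s = m := by
    rw [← h1]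
    exact (Set.ncard_eq_toFinset_card' s ▸ Set.toFinset_card s).symm
  apply treewidth_le
  apply key_lemma
  intro S'
  have h3 : (S'.map (Function.Embedding.subtype _)).card ≤ kk := by
    rw [Finset.card_map]
    calc S'.card ≤ Fintype.card ↥s := Finset.card_le_univ S'
      _ = m := hcards
      _ ≤ kk := hm
  have h4 := hA _ h3
  rw [Finset.card_map] at h4
  calc eCnt H S' ≤ eCnt G (S'.map (Function.Embedding.subtype _)) := eCnt_le_of_le G H h2 S'
    _ ≤ S'.card + TT S'.card := h4
    _ ≤ S'.card + TT m := by
        have : S'.card ≤ m := hcards ▸ Finset.card_le_univ S'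
        exact Nat.add_le_add_left (hTTmono this) _
-- (L3) trivial bound
lemma localTreewidth_le_pred {V : Type} [Finite V] (G : SimpleGraph V) (m : ℕ) :
    localTreewidth G m ≤ m - 1 := by
  apply localTreewidth_le
  intro s H h1 _
  haveI : Fintype ↥s := (Set.toFinite s).fintype
  cases isEmpty_or_nonempty ↥s with
  | inl h => exact le_trans (treewidth_le (hasTDWidth_of_isEmpty H 0)) (Nat.zero_le _)
  | inr h =>
    have hcards : Fintype.card ↥s = m := by
      rw [← h1]
      exact (Set.ncard_eq_toFinset_card' s ▸ Set.toFinset_card s).symm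
    exact hcards ▸ treewidth_le (hasTDWidth_univ H)

lemma edge_true {n : ℕ} (ω : Sym2 (Fin n) → Bool) (e : Sym2 (Fin n))
    (he : e ∈ (graphOf ω).edgeSet) : ω e = true := by
  induction e using Sym2.ind with
  | _ a b => exact he.2

def GoodEvent (n kk : ℕ) (TT : ℕ → ℕ) : Set (Sym2 (Fin n) → Bool) :=
  {ω | ∀ S : Finset (Fin n), S.card ≤ kk → eCnt (graphOf ω) S ≤ S.card + TT S.card}

lemma measure_cyl {n : ℕ} (p : ℝ) (E : Finset (Sym2 (Fin n))) :
    edgeMeasure n p {ω | ∀ e ∈ E, ω e = true} ≤ (ENNReal.ofReal p) ^ E.card := by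
  classical
  set q : ℝ≥0 := min (Real.toNNReal p) 1 with hq
  set ν : Measure Bool := (PMF.bernoulli q (min_le_right _ _)).toMeasure with hν
  have hfin : IsProbabilityMeasure ν := PMF.toMeasure.isProbabilityMeasure _
  have hset : {ω : Sym2 (Fin n) → Bool | ∀ e ∈ E, ω e = true}
      = Set.pi Set.univ (fun e => if e ∈ E then ({true} : Set Bool) else Set.univ) := by
    ext ω
    simp only [Set.mem_setOf_eq, Set.mem_pi, Set.mem_univ, forall_true_left]
    constructor
    · intro h e
      by_cases he : e ∈ E
      · simp [he, h e he]
      · simp [he]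
    · intro h e he
      have := h e
      simp [he] at this
      exact this
  rw [hset]
  unfold edgeMeasure
  rw [Measure.pi_pi]
  have hν1 : ν Set.univ = 1 := measure_univ
  have hνt : ν {true} = (q : ℝ≥0∞) := by
    rw [hν, PMF.toMeasure_apply_singleton _ _ (measurableSet_singleton _)]
    rfl
  have : ∀ e : Sym2 (Fin n), ν (if e ∈ E then ({true} : Set Bool) else Set.univ)
      = if e ∈ E then (q : ℝ≥0∞) else 1 := by
    intro e
    by_cases he : e ∈ E
    · rw [if_pos he, if_pos he, hνt]
    · rw [if_neg he, if_neg he, hν1]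
  rw [Finset.prod_congr rfl (fun e _ => this e)]
  rw [Finset.prod_ite_mem Finset.univ E (fun _ => (q : ℝ≥0∞)), Finset.univ_inter, Finset.prod_const]
  exact pow_le_pow_left' (ENNReal.coe_le_coe.mpr (min_le_left _ _)) E.card

lemma measure_bad_le (n kk : ℕ) (p : ℝ) (TT : ℕ → ℕ) :
    edgeMeasure n p ((GoodEvent n kk TT)ᶜ) ≤
      ∑ m ∈ Finset.range (kk + 1),
        ((n.choose m : ℝ≥0∞) * ((m * m).choose (m + TT m + 1) : ℝ≥0∞))
          * (ENNReal.ofReal p) ^ (m + TT m + 1) := by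
  classical
  -- complement is contained in a big union
  have hsub : (GoodEvent n kk TT)ᶜ ⊆
      ⋃ m ∈ Finset.range (kk + 1), ⋃ S ∈ Finset.powersetCard m (Finset.univ : Finset (Fin n)),
        ⋃ E ∈ Finset.powersetCard (S.card + TT S.card + 1) S.sym2,
          {ω : Sym2 (Fin n) → Bool | ∀ e ∈ E, ω e = true} := by
    intro ω hω
    simp only [GoodEvent, Set.mem_compl_iff, Set.mem_setOf_eq, not_forall] at hω
    obtain ⟨S, hScard, hbad⟩ := hω
    have hbad' : S.card + TT S.card + 1 ≤
        (@Finset.filter _ (fun e => e ∈ (graphOf ω).edgeSet) (Classical.decPred _) S.sym2).card := by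
      have : ¬ eCnt (graphOf ω) S ≤ S.card + TT S.card := hbad
      unfold eCnt at this
      omega
    obtain ⟨E, hE1, hE2⟩ := Finset.exists_subset_card_eq hbad'
    simp only [Set.mem_iUnion]
    refine ⟨S.card, ?_, S, ?_, E, ?_, ?_⟩
    · simp only [Finset.mem_range]; omega
    · simp [Finset.mem_powersetCard]
    · rw [Finset.mem_powersetCard]
      exact ⟨le_trans hE1 (@Finset.filter_subset _ (fun e => e ∈ (graphOf ω).edgeSet) (Classical.decPred _) S.sym2), hE2⟩
    · intro e he
      have h5 := hE1 he
      rw [@Finset.mem_filter _ (fun e => e ∈ (graphOf ω).edgeSet) (Classical.decPred _)] at h5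
      exact edge_true ω e h5.2
  refine le_trans (measure_mono hsub) ?_
  refine le_trans (measure_biUnion_finset_le _ _) ?_
  apply Finset.sum_le_sum
  intro m _
  refine le_trans (measure_biUnion_finset_le _ _) ?_
  have hterm : ∀ S ∈ Finset.powersetCard m (Finset.univ : Finset (Fin n)),
      edgeMeasure n p (⋃ E ∈ Finset.powersetCard (S.card + TT S.card + 1) S.sym2,
          {ω : Sym2 (Fin n) → Bool | ∀ e ∈ E, ω e = true})
      ≤ ((m * m).choose (m + TT m + 1) : ℝ≥0∞) * (ENNReal.ofReal p) ^ (m + TT m + 1) := by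
    intro S hS
    have hScard : S.card = m := (Finset.mem_powersetCard.mp hS).2
    refine le_trans (measure_biUnion_finset_le _ _) ?_
    have hone : ∀ E ∈ Finset.powersetCard (S.card + TT S.card + 1) S.sym2,
        edgeMeasure n p {ω : Sym2 (Fin n) → Bool | ∀ e ∈ E, ω e = true}
          ≤ (ENNReal.ofReal p) ^ (m + TT m + 1) := by
      intro E hE
      have hEcard : E.card = m + TT m + 1 := by
        rw [(Finset.mem_powersetCard.mp hE).2, hScard]
      rw [← hEcard]
      exact measure_cyl p E
    refine le_trans (Finset.sum_le_sum hone) ?_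
    rw [Finset.sum_const, nsmul_eq_mul]
    apply mul_le_mul_left
    norm_cast
    rw [Finset.card_powersetCard, hScard]
    apply Nat.choose_le_choose
    rw [Finset.card_sym2, hScard]
    rcases Nat.eq_zero_or_pos m with h0 | h1
    · subst h0; simp
    · calc Nat.choose (m + 1) 2 = (m + 1) * m / 2 := by
            rw [Nat.choose_two_right]
            rw [Nat.add_sub_cancel]
        _ ≤ m * m := by
            have : (m + 1) * m ≤ 2 * (m * m) := by nlinarith
            omega
  refine le_trans (Finset.sum_le_sum hterm) ?_
  rw [Finset.sum_const, nsmul_eq_mul]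
  rw [Finset.card_powersetCard, Finset.card_univ, Fintype.card_fin]
  rw [← mul_assoc]

lemma pow_le_factorial_mul_exp (r : ℕ) : (r : ℝ)^r ≤ (r.factorial : ℝ) * Real.exp 1 ^ r := by
  induction r with
  | zero => simp
  | succ r ih =>
    rcases Nat.eq_zero_or_pos r with h0 | hpos
    · subst h0
      simp only [Nat.factorial, Nat.cast_one, pow_one]
      have h1 : (1:ℝ) ≤ Real.exp 1 := Real.one_le_exp (by norm_num)
      push_cast
      nlinarith
    · have hrpos : (0:ℝ) < r := by exact_mod_cast hpos
      have h2 : (1 + 1/(r:ℝ)) ≤ Real.exp (1/(r:ℝ)) := by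
        have := Real.add_one_le_exp (1/(r:ℝ)); linarith
      have h1 : ((r:ℝ)+1)^r ≤ (r:ℝ)^r * Real.exp 1 := by
        have h3 : ((r:ℝ)+1) = (r:ℝ) * (1 + 1/r) := by field_simp
        calc ((r:ℝ)+1)^r = (r:ℝ)^r * (1+1/(r:ℝ))^r := by rw [h3, mul_pow]
          _ ≤ (r:ℝ)^r * Real.exp (1/(r:ℝ))^r := by
              apply mul_le_mul_of_nonneg_left _ (pow_nonneg hrpos.le r)
              exact pow_le_pow_left₀ (by positivity) h2 r
          _ = (r:ℝ)^r * Real.exp 1 := by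
              rw [← Real.exp_nat_mul]
              congr 1
              field_simp
      have hfpos : (0:ℝ) < r.factorial := by exact_mod_cast r.factorial_pos
      calc ((r+1 : ℕ) : ℝ)^(r+1) = ((r:ℝ)+1) * ((r:ℝ)+1)^r := by push_cast; ring
        _ ≤ ((r:ℝ)+1) * ((r:ℝ)^r * Real.exp 1) :=
            mul_le_mul_of_nonneg_left h1 (by positivity)
        _ ≤ ((r:ℝ)+1) * (((r.factorial : ℝ) * Real.exp 1 ^ r) * Real.exp 1) := by
            apply mul_le_mul_of_nonneg_left _ (by positivity)
            exact mul_le_mul_of_nonneg_right ih (Real.exp_pos 1).le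
        _ = ((r+1).factorial : ℝ) * Real.exp 1 ^ (r+1) := by
            rw [Nat.factorial_succ]
            push_cast
            ring

lemma choose_le_bound (N r : ℕ) (hr : 1 ≤ r) :
    (N.choose r : ℝ) ≤ (Real.exp 1 * N / r)^r := by
  have hrpos : (0:ℝ) < r := by exact_mod_cast hr
  have hfpos : (0:ℝ) < r.factorial := by exact_mod_cast r.factorial_pos
  have h2 : (N.choose r : ℝ) ≤ (N:ℝ)^r / r.factorial := Nat.choose_le_pow_div r N
  have h3 := pow_le_factorial_mul_exp r
  refine le_trans h2 ?_
  rw [div_pow, div_le_div_iff₀ hfpos (by positivity)]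
  calc (N:ℝ)^r * (r:ℝ)^r ≤ (N:ℝ)^r * ((r.factorial : ℝ) * Real.exp 1 ^ r) :=
        mul_le_mul_of_nonneg_left h3 (by positivity)
    _ = (Real.exp 1 * N)^r * (r.factorial : ℝ) := by rw [mul_pow]; ring

lemma geom_half_sum (N : ℕ) : ∑ i ∈ Finset.range N, ((1:ℝ)/2)^i ≤ 2 := by
  have key : ∀ N : ℕ, ∑ i ∈ Finset.range N, ((1:ℝ)/2)^i ≤ 2 - 2 * (1/2)^N := by
    intro N
    induction N with
    | zero => simp
    | succ N ih =>
      rw [Finset.sum_range_succ]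
      have : ((1:ℝ)/2)^(N+1) = (1/2)^N * (1/2) := by ring
      nlinarith [pow_nonneg (by norm_num : (0:ℝ) ≤ 1/2) N]
  have := key N
  nlinarith [pow_nonneg (by norm_num : (0:ℝ) ≤ 1/2) N]

lemma sum_est
    (ε C : ℝ) (hε : 0 < ε) (hε1 : ε < 1)
    (n : ℕ) (d : ℝ) (kk : ℕ) (TT : ℕ → ℕ)
    (hd1 : 1 ≤ d)
    (hn : Real.exp (8 / ε) ≤ (n : ℝ))
    (hdsmall : Real.log d ≤ ε / 4 * Real.log n)
    (hkk : (kk : ℝ) ≤ (n : ℝ) ^ (1 - ε))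
    (hTT : ∀ m : ℕ, C * m * Real.log d / Real.log n ≤ TT m + 1)
    (hCbig : Real.log 2 + 2 + Real.log d ≤ ε * C / 4 * Real.log d) :
    ∑ m ∈ Finset.range (kk+1),
        ((n.choose m : ℝ) * ((m*m).choose (m + TT m + 1) : ℝ) * (d/n)^(m + TT m + 1))
      ≤ (n:ℝ) ^ (-(ε/4)) := by
  have hE1 : (1:ℝ) ≤ Real.exp 1 := Real.one_le_exp (by norm_num)
  have hn1 : (1:ℝ) ≤ (n:ℝ) := le_trans (Real.one_le_exp (div_nonneg (by norm_num) hε.le)) hn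
  have hn0 : (0:ℝ) < (n:ℝ) := by linarith
  have hlogn : 8 / ε ≤ Real.log n := by
    calc 8 / ε = Real.log (Real.exp (8/ε)) := (Real.log_exp _).symm
      _ ≤ Real.log n := Real.log_le_log (Real.exp_pos _) hn
  have hlognpos : 0 < Real.log n := lt_of_lt_of_le (by positivity) hlogn
  have hd0 : (0:ℝ) < d := by linarith
  have hlogd : 0 ≤ Real.log d := Real.log_nonneg hd1
  -- d ≤ n ^ (ε/4)
  have hdn : d ≤ (n:ℝ) ^ (ε/4) := by
    calc d = Real.exp (Real.log d) := (Real.exp_log hd0).symm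
      _ ≤ Real.exp (ε/4 * Real.log n) := Real.exp_le_exp.mpr hdsmall
      _ = (n:ℝ) ^ (ε/4) := by rw [Real.rpow_def_of_pos hn0]; ring_nf
  -- exp 1 ≤ n ^ (ε/8)
  have hEn : Real.exp 1 ≤ (n:ℝ) ^ (ε/8) := by
    have h1 : (1:ℝ) ≤ ε/8 * Real.log n := by
      have he : ε/8 * (8/ε) = 1 := by field_simp
      calc (1:ℝ) = ε/8 * (8/ε) := he.symm
        _ ≤ ε/8 * Real.log n := mul_le_mul_of_nonneg_left hlogn (by positivity)
    calc Real.exp 1 ≤ Real.exp (ε/8 * Real.log n) := Real.exp_le_exp.mpr h1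
      _ = (n:ℝ) ^ (ε/8) := by rw [Real.rpow_def_of_pos hn0]; ring_nf
  -- the base bound b
  set b : ℝ := (n:ℝ) ^ (-(ε/2)) with hbdef
  have hb0 : 0 < b := Real.rpow_pos_of_pos hn0 _
  have hb1 : b ≤ 1 := Real.rpow_le_one_of_one_le_of_nonpos hn1 (by linarith)
  -- bound for each m ≥ 1
  have hterm : ∀ m : ℕ, 1 ≤ m → (m:ℝ) ≤ (kk:ℝ) →
      ((n.choose m : ℝ) * ((m*m).choose (m + TT m + 1) : ℝ) * (d/n)^(m + TT m + 1))
        ≤ (1/2)^m * (n:ℝ) ^ (-(ε/4)) := by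
    intro m hm hmk
    have hm0 : (0:ℝ) < m := by exact_mod_cast hm
    set r : ℕ := m + TT m + 1 with hrdef
    have hr1 : 1 ≤ r := by omega
    have hrm : m ≤ r := by omega
    set a : ℝ := Real.exp 1 * m * d / n with hadef
    have ha0 : 0 < a := by positivity
    -- choose bounds
    have hc1 : (n.choose m : ℝ) ≤ (Real.exp 1 * n / m)^m := choose_le_bound n m hm
    have hc2 : ((m*m).choose r : ℝ) ≤ (Real.exp 1 * m)^r := by
      refine le_trans (choose_le_bound (m*m) r hr1) ?_
      apply pow_le_pow_left₀ (by positivity)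
      rw [div_le_iff₀ (by exact_mod_cast lt_of_lt_of_le Nat.zero_lt_one hr1)]
      rw [hrdef]
      push_cast
      have hTTpos : (0:ℝ) ≤ (TT m : ℝ) := Nat.cast_nonneg _
      nlinarith [mul_nonneg (mul_nonneg (Real.exp_pos 1).le hm0.le) hTTpos,
        mul_nonneg (Real.exp_pos 1).le hm0.le, Real.exp_pos 1, hm0]
    -- assemble
    have hpn : (0:ℝ) ≤ d / n := by positivity
    have hstep1 : ((n.choose m : ℝ) * ((m*m).choose r : ℝ) * (d/n)^r)
        ≤ (Real.exp 1 * Real.exp 1 * d)^m * a^(TT m + 1) := by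
      have e1 : ((n.choose m : ℝ) * ((m*m).choose r : ℝ) * (d/n)^r)
          ≤ (Real.exp 1 * n / m)^m * (Real.exp 1 * m)^r * (d/n)^r := by
        apply mul_le_mul_of_nonneg_right _ (pow_nonneg hpn r)
        exact mul_le_mul hc1 hc2 (by positivity) (by positivity)
      refine le_trans e1 (le_of_eq ?_)
      have e2 : (Real.exp 1 * m)^r * (d/n)^r = (Real.exp 1 * m * (d/n))^r := by
        rw [← mul_pow]
      have e3 : Real.exp 1 * m * (d/n) = a := by rw [hadef]; field_simp
      have e4 : (Real.exp 1 * n / m) * a = Real.exp 1 * Real.exp 1 * d := by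
        rw [hadef]; field_simp
      have e5 : a ^ r = a ^ m * a ^ (TT m + 1) := by
        rw [hrdef, add_assoc, pow_add]
      calc (Real.exp 1 * n / m)^m * (Real.exp 1 * m)^r * (d/n)^r
          = (Real.exp 1 * n / m)^m * a^r := by rw [mul_assoc, e2, e3]
        _ = ((Real.exp 1 * n / m) * a)^m * a^(TT m + 1) := by
            rw [e5, ← mul_assoc, ← mul_pow]
        _ = (Real.exp 1 * Real.exp 1 * d)^m * a^(TT m + 1) := by rw [e4]
    -- a ≤ b
    have hm_kk : (m:ℝ) ≤ (n:ℝ)^(1-ε) := le_trans hmk hkk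
    have hab : a ≤ b := by
      have h5 : a ≤ (n:ℝ)^(ε/8) * (n:ℝ)^(1-ε) * (n:ℝ)^(ε/4) / n := by
        rw [hadef]
        gcongr
      have h6 : (n:ℝ)^(ε/8) * (n:ℝ)^(1-ε) * (n:ℝ)^(ε/4) / n
          = (n:ℝ)^(ε/8 + (1-ε) + ε/4 - 1) := by
        calc (n:ℝ)^(ε/8) * (n:ℝ)^(1-ε) * (n:ℝ)^(ε/4) / n
            = (n:ℝ)^(ε/8 + (1-ε)) * (n:ℝ)^(ε/4) / n := by rw [← Real.rpow_add hn0]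
          _ = (n:ℝ)^(ε/8 + (1-ε) + ε/4) / n := by rw [← Real.rpow_add hn0]
          _ = (n:ℝ)^(ε/8 + (1-ε) + ε/4) / (n:ℝ)^(1:ℝ) := by rw [Real.rpow_one]
          _ = (n:ℝ)^(ε/8 + (1-ε) + ε/4 - 1) := by rw [← Real.rpow_sub hn0]
      have h7 : (n:ℝ)^(ε/8 + (1-ε) + ε/4 - 1) ≤ b := by
        rw [hbdef]
        exact Real.rpow_le_rpow_of_exponent_le hn1 (by linarith)
      rw [h6] at h5
      exact le_trans h5 h7
    -- exponent bookkeeping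
    set LL : ℝ := Real.log d / Real.log n with hLLdef
    have hLL0 : 0 ≤ LL := by positivity
    have hkey : ∀ z : ℝ, (n:ℝ)^(z * LL) = d ^ z := by
      intro z
      rw [hLLdef, Real.rpow_def_of_pos hn0, Real.rpow_def_of_pos hd0]
      congr 1
      field_simp
    have hsplit : a ^ (TT m + 1) ≤ d ^ (-(ε*C*(m:ℝ)/4)) * (n:ℝ)^(-(ε/4)) := by
      have h6 : a ^ (TT m + 1) ≤ b ^ (TT m + 1) := pow_le_pow_left₀ ha0.le hab _
      have h7 : b ^ (TT m + 1) = b ^ (((TT m + 1 : ℕ)) : ℝ) := (Real.rpow_natCast b _).symm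
      have h8 : b ^ (((TT m + 1 : ℕ)) : ℝ) ≤ b ^ (C * (m:ℝ) * LL / 2 + 1/2) := by
        apply Real.rpow_le_rpow_of_exponent_ge hb0 hb1
        have h10 : (0:ℝ) ≤ (TT m : ℝ) := by positivity
        push_cast
        -- C m LL ≤ TT m + 1 and 1 ≤ TT m + 1, so average works
        have h11 : C * (m:ℝ) * LL ≤ (TT m : ℝ) + 1 := by
          calc C * (m:ℝ) * LL = C * (m:ℝ) * Real.log d / Real.log n := by
                rw [hLLdef]; ring
            _ ≤ (TT m : ℝ) + 1 := hTT m
        linarith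
      have h12 : b ^ (C * (m:ℝ) * LL / 2 + 1/2) = b ^ (C * (m:ℝ) * LL / 2) * b ^ ((1:ℝ)/2) :=
        Real.rpow_add hb0 _ _
      have h13 : b ^ (C * (m:ℝ) * LL / 2) = d ^ (-(ε*C*(m:ℝ)/4)) := by
        rw [hbdef, ← Real.rpow_mul hn0.le]
        have he : -(ε/2) * (C * (m:ℝ) * LL / 2) = (-(ε*C*(m:ℝ)/4)) * LL := by ring
        rw [he, hkey]
      have h14 : b ^ ((1:ℝ)/2) = (n:ℝ) ^ (-(ε/4)) := by
        rw [hbdef, ← Real.rpow_mul hn0.le]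
        congr 1
        ring
      calc a ^ (TT m + 1) ≤ b ^ (TT m + 1) := h6
        _ = b ^ (((TT m + 1 : ℕ)) : ℝ) := h7
        _ ≤ b ^ (C * (m:ℝ) * LL / 2 + 1/2) := h8
        _ = b ^ (C * (m:ℝ) * LL / 2) * b ^ ((1:ℝ)/2) := h12
        _ = d ^ (-(ε*C*(m:ℝ)/4)) * (n:ℝ)^(-(ε/4)) := by rw [h13, h14]
    -- combine with the (e^2 d)^m factor
    have hhalf : (Real.exp 1 * Real.exp 1 * d)^m * d ^ (-(ε*C*(m:ℝ)/4)) ≤ (1/2)^m := by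
      have hdm : d ^ (-(ε*C*(m:ℝ)/4)) = (d ^ (-(ε*C/4)))^m := by
        rw [← Real.rpow_natCast (d ^ (-(ε*C/4))) m, ← Real.rpow_mul hd0.le]
        congr 1
        ring
      rw [hdm, ← mul_pow]
      apply pow_le_pow_left₀ (by positivity)
      -- base inequality
      have hbase : Real.exp 1 * Real.exp 1 * d * d ^ (-(ε*C/4))
          = Real.exp (2 + Real.log d + Real.log d * (-(ε*C/4))) := by
        rw [Real.exp_add, Real.exp_add, Real.exp_log hd0, Real.rpow_def_of_pos hd0]
        have : Real.exp 2 = Real.exp 1 * Real.exp 1 := by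
          rw [← Real.exp_add]; norm_num
        rw [this]
      rw [hbase]
      have harg : 2 + Real.log d + Real.log d * (-(ε*C/4)) ≤ -Real.log 2 := by linarith [hCbig]
      calc Real.exp (2 + Real.log d + Real.log d * (-(ε*C/4)))
          ≤ Real.exp (-Real.log 2) := Real.exp_le_exp.mpr harg
        _ = 1/2 := by rw [Real.exp_neg, Real.exp_log (by norm_num : (0:ℝ) < 2)]; norm_num
    -- put everything together
    calc ((n.choose m : ℝ) * ((m*m).choose r : ℝ) * (d/n)^r)
        ≤ (Real.exp 1 * Real.exp 1 * d)^m * a^(TT m + 1) := hstep1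
      _ ≤ (Real.exp 1 * Real.exp 1 * d)^m * (d ^ (-(ε*C*(m:ℝ)/4)) * (n:ℝ)^(-(ε/4))) := by
          apply mul_le_mul_of_nonneg_left hsplit (by positivity)
      _ = ((Real.exp 1 * Real.exp 1 * d)^m * d ^ (-(ε*C*(m:ℝ)/4))) * (n:ℝ)^(-(ε/4)) := by
          ring
      _ ≤ (1/2)^m * (n:ℝ)^(-(ε/4)) := by
          apply mul_le_mul_of_nonneg_right hhalf (Real.rpow_nonneg hn0.le _)
  -- sum up
  rw [Finset.sum_range_succ']
  have hzero : ((n.choose 0 : ℝ) * (((0*0).choose (0 + TT 0 + 1)) : ℝ) * (d/n)^(0 + TT 0 + 1)) = 0 := by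
    have : (0*0 : ℕ).choose (0 + TT 0 + 1) = 0 := by
      apply Nat.choose_eq_zero_of_lt
      omega
    rw [this]
    simp
  rw [hzero, add_zero]
  have hsum : ∑ i ∈ Finset.range kk,
      ((n.choose (i+1) : ℝ) * (((i+1)*(i+1)).choose ((i+1) + TT (i+1) + 1) : ℝ)
        * (d/n)^((i+1) + TT (i+1) + 1))
      ≤ ∑ i ∈ Finset.range kk, (1/2)^(i+1) * (n:ℝ)^(-(ε/4)) := by
    apply Finset.sum_le_sum
    intro i hi
    apply hterm (i+1) (by omega)
    have : (i:ℝ) + 1 ≤ (kk:ℝ) := by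
      rw [Finset.mem_range] at hi
      exact_mod_cast Nat.succ_le_of_lt hi
    exact_mod_cast this
  refine le_trans hsum ?_
  have hfac : ∑ i ∈ Finset.range kk, ((1:ℝ)/2)^(i+1) * (n:ℝ)^(-(ε/4))
      = (∑ i ∈ Finset.range kk, ((1:ℝ)/2)^i) * ((1/2) * (n:ℝ)^(-(ε/4))) := by
    rw [Finset.sum_mul]
    apply Finset.sum_congr rfl
    intro i _
    ring
  rw [hfac]
  have h20 := geom_half_sum kk
  have h21 : (0:ℝ) ≤ (n:ℝ)^(-(ε/4)) := Real.rpow_nonneg hn0.le _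
  nlinarith [Finset.sum_nonneg (fun i _ => pow_nonneg (by norm_num : (0:ℝ) ≤ 1/2) i :
    ∀ i ∈ Finset.range kk, (0:ℝ) ≤ ((1:ℝ)/2)^i)]

/-- For every ε ∈ (0,1) and δ > 0 there is C = C(ε,δ) > 0 such that for
d = d(n) ≥ 1+δ, p = d/n, and k = k(n) ≤ n^(1-ε), w.h.p. the random graph G(n,p)
satisfies, simultaneously for every m ≤ k, t_m(G) ≤ 3 + C·m·log d / log n. -/
theorem local_treewidth_upper_bound_random_graph
    (ε δ : ℝ) (hε : ε ∈ Set.Ioo (0 : ℝ) 1) (hδ : 0 < δ) :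
    ∃ C : ℝ, 0 < C ∧
      ∀ (d : ℕ → ℝ) (k : ℕ → ℕ),
        (∀ n, 1 + δ ≤ d n) →
        (∀ n : ℕ, (k n : ℝ) ≤ (n : ℝ) ^ (1 - ε)) →
        Tendsto
          (fun n : ℕ =>
            edgeMeasure n (d n / n)
              {ω | ∀ m ≤ k n,
                (localTreewidth (graphOf ω) m : ℝ) ≤
                  3 + C * m * Real.log (d n) / Real.log n})
          atTop (nhds 1) := by
  obtain ⟨hε0, hε1⟩ := hε
  have hlog1δ : 0 < Real.log (1+δ) := Real.log_pos (by linarith)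
  set C : ℝ := (8/ε) * (1 + 3 / Real.log (1+δ)) with hCdef
  have hC0 : 0 < C := by positivity
  have hCe : ε * C / 4 = 2 + 6 / Real.log (1+δ) := by
    rw [hCdef]; field_simp; ring
  refine ⟨C, hC0, ?_⟩
  intro d k hd hk
  have hprob : ∀ (n : ℕ) (p : ℝ), IsProbabilityMeasure (edgeMeasure n p) := by
    intro n p
    unfold edgeMeasure
    infer_instance
  -- the lower bound, for all large n
  have hlb : ∀ n : ℕ, 2 ≤ n → Real.exp (8/ε) ≤ (n:ℝ) →
      1 - ENNReal.ofReal ((n:ℝ)^(-(ε/4))) ≤ edgeMeasure n (d n / n)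
        {ω | ∀ m ≤ k n,
          (localTreewidth (graphOf ω) m : ℝ) ≤
            3 + C * m * Real.log (d n) / Real.log n} := by
    intro n hn2 hnexp
    haveI := hprob n (d n / n)
    have hn1 : (1:ℝ) < (n:ℝ) := by exact_mod_cast hn2
    have hn0 : (0:ℝ) < (n:ℝ) := by linarith
    have hlogn : 0 < Real.log n := Real.log_pos hn1
    have hd1 : (1:ℝ) ≤ d n := by have := hd n; linarith
    have hd0 : (0:ℝ) < d n := by linarith
    have hlogd : 0 ≤ Real.log (d n) := Real.log_nonneg hd1
    have hp0 : (0:ℝ) ≤ d n / n := by positivity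
    set TT : ℕ → ℕ := fun m => ⌊C * m * Real.log (d n) / Real.log n⌋₊ with hTTdef
    have hTTle : ∀ m : ℕ, (TT m : ℝ) ≤ C * m * Real.log (d n) / Real.log n :=
      fun m => Nat.floor_le (by positivity)
    have hTT1 : ∀ m : ℕ, C * m * Real.log (d n) / Real.log n ≤ TT m + 1 :=
      fun m => (Nat.lt_floor_add_one _).le
    by_cases hcase : Real.log (d n) ≤ ε/4 * Real.log n
    · -- probabilistic case
      have hTTmono : Monotone TT := by
        intro m m' hmm
        apply Nat.floor_le_floor
        have : (m:ℝ) ≤ (m':ℝ) := by exact_mod_cast hmm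
        gcongr
      have hGsub : GoodEvent n (k n) TT ⊆
          {ω | ∀ m ≤ k n,
            (localTreewidth (graphOf ω) m : ℝ) ≤
              3 + C * m * Real.log (d n) / Real.log n} := by
        intro ω hω
        intro m hm
        have h1 := localTreewidth_bound (graphOf ω) (k n) TT hTTmono hω m hm
        have h2 : (localTreewidth (graphOf ω) m : ℝ) ≤ (TT m : ℝ) + 2 := by
          exact_mod_cast h1
        have h3 := hTTle m
        linarith
      -- the error bound
      have hCbig : Real.log 2 + 2 + Real.log (d n) ≤ ε * C / 4 * Real.log (d n) := by
        have hld : Real.log (1+δ) ≤ Real.log (d n) :=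
          Real.log_le_log (by linarith) (hd n)
        have h6 : (6:ℝ) ≤ 6 * (Real.log (d n) / Real.log (1+δ)) := by
          have : (1:ℝ) ≤ Real.log (d n) / Real.log (1+δ) :=
            (one_le_div hlog1δ).mpr hld
          linarith
        have hl2 : Real.log 2 ≤ 1 :=
          le_trans Real.log_two_lt_d9.le (by norm_num)
        rw [hCe]
        have hexpand : (2 + 6 / Real.log (1+δ)) * Real.log (d n)
            = 2 * Real.log (d n) + 6 * (Real.log (d n) / Real.log (1+δ)) := by
          ring
        rw [hexpand]
        linarith
      have hsumR := sum_est ε C hε0 hε1 n (d n) (k n) TT hd1 hnexp hcase (hk n) hTT1 hCbig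
      have hErr : edgeMeasure n (d n / n) ((GoodEvent n (k n) TT)ᶜ)
          ≤ ENNReal.ofReal ((n:ℝ)^(-(ε/4))) := by
        refine le_trans (measure_bad_le n (k n) (d n / n) TT) ?_
        have hconv : ∀ m ∈ Finset.range (k n + 1),
            ((n.choose m : ℝ≥0∞) * ((m * m).choose (m + TT m + 1) : ℝ≥0∞))
              * (ENNReal.ofReal (d n / n)) ^ (m + TT m + 1)
            = ENNReal.ofReal ((n.choose m : ℝ) * ((m*m).choose (m + TT m + 1) : ℝ)
                * (d n / n)^(m + TT m + 1)) := by
          intro m _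
          rw [ENNReal.ofReal_mul (by positivity), ENNReal.ofReal_mul (by positivity)]
          rw [ENNReal.ofReal_natCast, ENNReal.ofReal_natCast, ENNReal.ofReal_pow hp0]
        rw [Finset.sum_congr rfl hconv]
        rw [← ENNReal.ofReal_sum_of_nonneg (fun m _ => by positivity)]
        exact ENNReal.ofReal_le_ofReal hsumR
      rw [tsub_le_iff_right]
      calc (1:ℝ≥0∞) = edgeMeasure n (d n / n) Set.univ := (measure_univ).symm
        _ = edgeMeasure n (d n / n)
              ((GoodEvent n (k n) TT) ∪ (GoodEvent n (k n) TT)ᶜ) := by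
            rw [Set.union_compl_self]
        _ ≤ edgeMeasure n (d n / n) (GoodEvent n (k n) TT)
              + edgeMeasure n (d n / n) ((GoodEvent n (k n) TT)ᶜ) := measure_union_le _ _
        _ ≤ edgeMeasure n (d n / n)
              {ω | ∀ m ≤ k n,
                (localTreewidth (graphOf ω) m : ℝ) ≤
                  3 + C * m * Real.log (d n) / Real.log n}
              + ENNReal.ofReal ((n:ℝ)^(-(ε/4))) :=
            add_le_add (measure_mono hGsub) hErr
    · -- deterministic case : d is large
      push_neg at hcase
      have hset : {ω : Sym2 (Fin n) → Bool | ∀ m ≤ k n,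
          (localTreewidth (graphOf ω) m : ℝ) ≤
            3 + C * m * Real.log (d n) / Real.log n} = Set.univ := by
        ext ω
        simp only [Set.mem_setOf_eq, Set.mem_univ, iff_true]
        intro m hm
        have h1 : localTreewidth (graphOf ω) m ≤ m - 1 := localTreewidth_le_pred _ m
        have h2 : (localTreewidth (graphOf ω) m : ℝ) ≤ (m : ℝ) := by
          have h3 : localTreewidth (graphOf ω) m ≤ m := le_trans h1 (Nat.sub_le m 1)
          exact_mod_cast h3
        have h4 : (m:ℝ) ≤ C * m * Real.log (d n) / Real.log n := by
          have h5 : ε/4 < Real.log (d n) / Real.log n := by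
            rw [lt_div_iff₀ hlogn]
            linarith
          have h7 : 2 ≤ ε * C / 4 := by
            rw [hCe]
            have : 0 < 6 / Real.log (1+δ) := by positivity
            linarith
          have h8 : C * m * Real.log (d n) / Real.log n
              = (C * (Real.log (d n) / Real.log n)) * m := by
            ring
          rw [h8]
          have h9 : (1:ℝ) ≤ C * (Real.log (d n) / Real.log n) := by
            have h10 : C * (ε/4) ≤ C * (Real.log (d n) / Real.log n) := by
              apply mul_le_mul_of_nonneg_left h5.le hC0.le
            have h11 : C * (ε/4) = ε * C / 4 := by ring
            linarith
          nlinarith [Nat.cast_nonneg (α := ℝ) m]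
        linarith
      rw [hset, measure_univ]
      exact tsub_le_self
  -- assemble the limit
  have hlim0 : Tendsto (fun n : ℕ => ENNReal.ofReal ((n:ℝ)^(-(ε/4)))) atTop (nhds 0) := by
    have h1 : Tendsto (fun n : ℕ => (n:ℝ)^(-(ε/4))) atTop (nhds 0) :=
      (tendsto_rpow_neg_atTop (by positivity)).comp tendsto_natCast_atTop_atTop
    have h2 := (ENNReal.continuous_ofReal.tendsto 0).comp h1
    simpa [Function.comp_def] using h2
  have hlim : Tendsto (fun n : ℕ => 1 - ENNReal.ofReal ((n:ℝ)^(-(ε/4)))) atTop (nhds 1) := by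
    have hc : Continuous (fun x : ℝ≥0∞ => 1 - x) :=
      ENNReal.continuous_sub_left ENNReal.one_ne_top
    have h2 := (hc.tendsto 0).comp hlim0
    simpa [Function.comp_def] using h2
  apply tendsto_of_tendsto_of_tendsto_of_le_of_le' hlim tendsto_const_nhds
  · filter_upwards [eventually_ge_atTop 2,
      eventually_ge_atTop ⌈Real.exp (8/ε)⌉₊] with n h2 hexp
    apply hlb n h2
    calc Real.exp (8/ε) ≤ (⌈Real.exp (8/ε)⌉₊ : ℝ) := Nat.le_ceil _
      _ ≤ (n : ℝ) := by exact_mod_cast hexp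
  · apply Eventually.of_forall
    intro n
    haveI := hprob n (d n / n)
    exact prob_le_one
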